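/- Let R be a one-dimensional reduced standard graded Cohen–Macaulay k-algebra with a-invariant a, y a linear parameter, K the total ring of quotients, and let B be any non-negatively graded Noetherian ring with R[𝔪/y] ⊆ B ⊆ K that is a finite R[𝔪/y]-module. Then B = R[𝔪/y], and for every i ≥ j and j ≥ a+1 one has (y^i) :_R 𝔪^j = y^{i-j}(R :_K B) = 𝔪^{i-j}(R :_K B). -/

import Mathlib

/-- Integer power of an ideal; by convention nonpositive exponents give the unit ideal. -/
def ipow {R : Type*} [CommRing R] (I : Ideal R) (n : ℤ) : Ideal R := I ^ n.toNat

/-- The fractional ideal `𝔪/y = {z ∈ K | z·y ∈ 𝔪}` inside the total quotient ring. -/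
def mOverY {R K : Type*} [CommRing R] [CommRing K] [Algebra R K] (𝔪 : Ideal R) (y : R) :
    Set K := {z : K | ∃ m ∈ 𝔪, z * algebraMap R K y = algebraMap R K m}

/-- The conductor `R :_K B = {z ∈ K | z·B ⊆ R}` as an `R`-submodule of `K`. -/
def conductorSet {R K : Type*} [CommRing R] [CommRing K] [Algebra R K] (B : Set K) :
    Submodule R K where
  carrier := {z | ∀ b ∈ B, ∃ r : R, z * b = algebraMap R K r}
  add_mem' := by
    intro x y hx hy b hb
    obtain ⟨r, hr⟩ := hx b hb
    obtain ⟨s, hs⟩ := hy b hb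
    exact ⟨r + s, by rw [add_mul, hr, hs, map_add]⟩
  zero_mem' := fun b hb => ⟨0, by rw [zero_mul, map_zero]⟩
  smul_mem' := by
    intro c x hx b hb
    obtain ⟨r, hr⟩ := hx b hb
    exact ⟨c * r, by rw [Algebra.smul_def, mul_assoc, hr, map_mul]⟩


section Aux
variable {R : Type*} [CommRing R] {y : R}

lemma aux_cancel (hy : y ∈ nonZeroDivisors R) (n : ℕ) {t u : R}
    (h : t * y ^ n = u * y ^ n) : t = u := by
  have h0 : (t - u) * y ^ n = 0 := by rw [sub_mul, h, sub_self]
  exact sub_eq_zero.mp ((pow_mem hy n).2 (t - u) h0)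

lemma aux_colon_step (hy : y ∈ nonZeroDivisors R) (𝔪 : Ideal R) (hym : y ∈ 𝔪) (J d : ℕ) :
    Submodule.colon (Ideal.span {y ^ (J + d)}) (𝔪 ^ J : Ideal R)
      = Ideal.span {y ^ d} * Submodule.colon (Ideal.span {y ^ J}) (𝔪 ^ J : Ideal R) := by
  apply le_antisymm
  · intro r hr
    have h1 : r * y ^ J ∈ Ideal.span {y ^ (J + d)} := by
      simpa [smul_eq_mul] using Submodule.mem_colon.mp hr (y ^ J) (Ideal.pow_mem_pow hym J)
    obtain ⟨t, ht⟩ := Ideal.mem_span_singleton'.mp h1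
    rw [pow_add] at ht
    have hrty : r = t * y ^ d := by
      apply aux_cancel hy J
      linear_combination -ht
    have htC : t ∈ Submodule.colon (Ideal.span {y ^ J}) (𝔪 ^ J : Ideal R) := by
      rw [Submodule.mem_colon]
      intro m hm
      have h2 : r * m ∈ Ideal.span {y ^ (J + d)} := by
        simpa [smul_eq_mul] using Submodule.mem_colon.mp hr m hm
      obtain ⟨u, hu⟩ := Ideal.mem_span_singleton'.mp h2
      rw [pow_add] at hu
      have : t * m = u * y ^ J := by
        apply aux_cancel hy d
        linear_combination -hu - m * hrty
      simpa [smul_eq_mul] using Ideal.mem_span_singleton'.mpr ⟨u, this.symm⟩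
    rw [hrty]
    exact Ideal.mem_span_singleton_mul.mpr ⟨t, htC, by rw [mul_comm]⟩
  · rw [Ideal.span_singleton_mul_le_iff]
    intro t ht
    rw [Submodule.mem_colon]
    intro m hm
    have h3 := Submodule.mem_colon.mp ht m hm
    rw [smul_eq_mul] at h3
    obtain ⟨u, hu⟩ := Ideal.mem_span_singleton'.mp h3
    have : y ^ d * t * m = u * y ^ (J + d) := by
      rw [pow_add]; linear_combination -(y ^ d) * hu
    simpa [smul_eq_mul] using Ideal.mem_span_singleton'.mpr ⟨u, this.symm⟩

lemma aux_colon_eq (hy : y ∈ nonZeroDivisors R) (𝔪 : Ideal R) (c : ℕ)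
    (hpow : ∀ d : ℕ, 𝔪 ^ (c + d) = Ideal.span {y ^ d} * 𝔪 ^ c) (d : ℕ) :
    Submodule.colon (Ideal.span {y ^ (c + d)}) (𝔪 ^ (c + d) : Ideal R)
      = Submodule.colon (Ideal.span {y ^ c}) (𝔪 ^ c : Ideal R) := by
  apply le_antisymm
  · intro r hr
    rw [Submodule.mem_colon]
    intro m hm
    have hmem : y ^ d * m ∈ 𝔪 ^ (c + d) := by
      rw [hpow d]
      exact Ideal.mul_mem_mul (Ideal.subset_span rfl) hm
    have h4 := Submodule.mem_colon.mp hr _ hmem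
    rw [smul_eq_mul] at h4
    obtain ⟨u, hu⟩ := Ideal.mem_span_singleton'.mp h4
    rw [pow_add] at hu
    have : r * m = u * y ^ c := by
      apply aux_cancel hy d
      linear_combination -hu
    simpa [smul_eq_mul] using Ideal.mem_span_singleton'.mpr ⟨u, this.symm⟩
  · intro r hr
    rw [Submodule.mem_colon]
    intro m hm
    rw [hpow d] at hm
    obtain ⟨z, hz, hzy⟩ := Ideal.mem_span_singleton_mul.mp hm
    have h5 := Submodule.mem_colon.mp hr z hz
    rw [smul_eq_mul] at h5
    obtain ⟨u, hu⟩ := Ideal.mem_span_singleton'.mp h5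
    have : r * m = u * y ^ (c + d) := by
      rw [pow_add]; linear_combination -r * hzy - y ^ d * hu
    simpa [smul_eq_mul] using Ideal.mem_span_singleton'.mpr ⟨u, this.symm⟩

lemma aux_mC (hy : y ∈ nonZeroDivisors R) (𝔪 : Ideal R) (hym : y ∈ 𝔪) (c : ℕ)
    (hpow : ∀ d : ℕ, 𝔪 ^ (c + d) = Ideal.span {y ^ d} * 𝔪 ^ c) :
    𝔪 * Submodule.colon (Ideal.span {y ^ c}) (𝔪 ^ c : Ideal R)
      = Ideal.span {y} * Submodule.colon (Ideal.span {y ^ c}) (𝔪 ^ c : Ideal R) := by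
  apply le_antisymm
  · rw [Ideal.mul_le]
    intro m hm r hr
    have h1 : m * r ∈ Submodule.colon (Ideal.span {y ^ (c + 1)}) (𝔪 ^ c : Ideal R) := by
      rw [Submodule.mem_colon]
      intro u hu
      have hmu : m * u ∈ 𝔪 ^ (c + 1) := by
        have h0 : u * m ∈ 𝔪 ^ c * 𝔪 := Ideal.mul_mem_mul hu hm
        rw [pow_succ, mul_comm m u]
        exact h0
      rw [hpow 1] at hmu
      obtain ⟨v, hv, hvy⟩ := Ideal.mem_span_singleton_mul.mp hmu
      rw [pow_one] at hvy
      have h2 := Submodule.mem_colon.mp hr v hv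
      rw [smul_eq_mul] at h2
      obtain ⟨s, hs⟩ := Ideal.mem_span_singleton'.mp h2
      have : m * r * u = s * y ^ (c + 1) := by
        rw [pow_succ]; linear_combination -r * hvy - y * hs
      simpa [smul_eq_mul] using Ideal.mem_span_singleton'.mpr ⟨s, this.symm⟩
    rw [aux_colon_step hy 𝔪 hym c 1, pow_one] at h1
    exact h1
  · exact Ideal.mul_mono (Ideal.span_le.mpr (Set.singleton_subset_iff.mpr hym)) le_rfl

lemma aux_powC (hy : y ∈ nonZeroDivisors R) (𝔪 : Ideal R) (hym : y ∈ 𝔪) (c : ℕ)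
    (hpow : ∀ d : ℕ, 𝔪 ^ (c + d) = Ideal.span {y ^ d} * 𝔪 ^ c) (d : ℕ) :
    𝔪 ^ d * Submodule.colon (Ideal.span {y ^ c}) (𝔪 ^ c : Ideal R)
      = Ideal.span {y ^ d} * Submodule.colon (Ideal.span {y ^ c}) (𝔪 ^ c : Ideal R) := by
  set C := Submodule.colon (Ideal.span {y ^ c}) (𝔪 ^ c : Ideal R) with hC
  induction d with
  | zero => simp [Ideal.span_singleton_one]
  | succ d ih =>
    calc 𝔪 ^ (d + 1) * C = 𝔪 ^ d * (𝔪 * C) := by rw [pow_succ, mul_assoc]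
      _ = 𝔪 ^ d * (Ideal.span {y} * C) := by rw [aux_mC hy 𝔪 hym c hpow]
      _ = Ideal.span {y} * (𝔪 ^ d * C) := by ring
      _ = Ideal.span {y} * (Ideal.span {y ^ d} * C) := by rw [ih]
      _ = Ideal.span {y ^ (d + 1)} * C := by
          rw [← mul_assoc, Ideal.span_singleton_mul_span_singleton, ← pow_succ']

end Aux

/-- **Remark 2.18**: Let `R` be a one-dimensional reduced standard graded Cohen–Macaulay
`k`-algebra with `a`-invariant `a`, `y` a linear parameter, `K` the total ring of quotients,
and `B` any non-negatively graded Noetherian ring with `R[𝔪/y] ⊆ B ⊆ K` that is a finite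
`R[𝔪/y]`-module.  Then `B = R[𝔪/y]`, and for every `i ≥ j` and `j ≥ a + 1` one has
`(y^i) :_R 𝔪^j = y^(i-j)(R :_K B) = 𝔪^(i-j)(R :_K B)`. -/
theorem statement_14
    {k R : Type*} [Field k] [CommRing R] [Algebra k R] [IsNoetherianRing R] [IsReduced R]
    -- `R` is standard graded over `k`:
    (𝒜 : ℤ → Submodule k R) [GradedAlgebra 𝒜]
    (hneg : ∀ i : ℤ, i < 0 → 𝒜 i = ⊥)
    (hstd : ∀ i : ℤ, 0 ≤ i → 𝒜 (i + 1) = 𝒜 1 * 𝒜 i)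
    -- of dimension one:
    (hdim : ringKrullDim R = 1)
    -- `𝔪` is the homogeneous maximal ideal:
    (𝔪 : Ideal R) (h𝔪 : 𝔪 = Ideal.span (𝒜 1 : Set R))
    -- `y` is a linear nonzerodivisor parameter (this encodes that `R` is Cohen–Macaulay):
    (y : R) (hy1 : y ∈ 𝒜 1) (hynzd : y ∈ nonZeroDivisors R)
    (hsop : 𝔪 ≤ (Ideal.span {y}).radical)
    -- `a` is the `a`-invariant, characterized by the reduction number `r_(y)(𝔪) = a + 1`:
    (a : ℤ) (ha : 0 ≤ a + 1)
    (hred : ∀ n : ℤ, a + 1 ≤ n → ipow 𝔪 (n + 1) = Ideal.span {y} * ipow 𝔪 n)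
    (hmin : ¬ ipow 𝔪 (a + 1) = Ideal.span {y} * ipow 𝔪 a)
    -- `B` is a subring of the total quotient ring `K` containing `R[𝔪/y]`:
    (B : Subalgebra R (FractionRing R))
    (hAB : Algebra.adjoin R (mOverY 𝔪 y) ≤ B)
    -- `B` is Noetherian:
    (hBnoeth : IsNoetherianRing B)
    -- `B` is a finite module over `R[𝔪/y]`:
    (hBfin : ∃ s : Finset (FractionRing R), ∀ z ∈ B,
      z ∈ Subalgebra.toSubmodule (Algebra.adjoin R (mOverY 𝔪 y))
          * Submodule.span R (s : Set (FractionRing R)))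
    -- `B` is non-negatively graded (for the grading of `K` induced from that of `R`):
    (hBnonneg : ∀ z ∈ B, z ∈ Submodule.span R (⋃ i : ℤ, ⋃ (_ : 0 ≤ i),
      {z' : FractionRing R | ∃ n : ℕ, ∃ r ∈ 𝒜 (i + n),
        z' * algebraMap R (FractionRing R) (y ^ n) = algebraMap R (FractionRing R) r}))
    (i j : ℤ) (hj : a + 1 ≤ j) (hij : j ≤ i) :
    B = Algebra.adjoin R (mOverY 𝔪 y)
    ∧ Submodule.map (Algebra.linearMap R (FractionRing R))
          (Submodule.colon (ipow (Ideal.span {y}) i) (ipow 𝔪 j))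
        = Submodule.span R {(algebraMap R (FractionRing R) y) ^ (i - j).toNat}
            * conductorSet (B : Set (FractionRing R))
    ∧ Submodule.map (Algebra.linearMap R (FractionRing R))
          (Submodule.colon (ipow (Ideal.span {y}) i) (ipow 𝔪 j))
        = ipow 𝔪 (i - j) • conductorSet (B : Set (FractionRing R)) := by
  classical
  -- notation
  have hinj : Function.Injective (algebraMap R (FractionRing R)) :=
    IsFractionRing.injective R (FractionRing R)
  have hYu : IsUnit (algebraMap R (FractionRing R) y) :=
    IsLocalization.map_units (FractionRing R) (⟨y, hynzd⟩ : nonZeroDivisors R)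
  have hKcancel : ∀ (n : ℕ) (z w : FractionRing R),
      z * (algebraMap R (FractionRing R) y) ^ n = w * (algebraMap R (FractionRing R) y) ^ n →
      z = w := by
    intro n z w h
    exact (hYu.pow n).mul_right_cancel h
  have hym : y ∈ 𝔪 := h𝔪 ▸ Ideal.subset_span hy1
  obtain ⟨c, hc⟩ : ∃ c : ℕ, (c : ℤ) = a + 1 := ⟨(a + 1).toNat, by omega⟩
  -- the power stabilization
  have hstep : ∀ e : ℕ, 𝔪 ^ (c + e + 1) = Ideal.span {y} * 𝔪 ^ (c + e) := by
    intro e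
    have h := hred (a + 1 + e) (by omega)
    have h1 : (a + 1 + (e : ℤ) + 1).toNat = c + e + 1 := by omega
    have h2 : (a + 1 + (e : ℤ)).toNat = c + e := by omega
    simpa [ipow, h1, h2] using h
  have hpow : ∀ d : ℕ, 𝔪 ^ (c + d) = Ideal.span {y ^ d} * 𝔪 ^ c := by
    intro d
    induction d with
    | zero => simp [Ideal.span_singleton_one]
    | succ d ih =>
      calc 𝔪 ^ (c + (d + 1)) = Ideal.span {y} * 𝔪 ^ (c + d) := hstep d
        _ = Ideal.span {y} * (Ideal.span {y ^ d} * 𝔪 ^ c) := by rw [ih]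
        _ = Ideal.span {y ^ (d + 1)} * 𝔪 ^ c := by
            rw [← mul_assoc, Ideal.span_singleton_mul_span_singleton, ← pow_succ']
  -- m ∈ 𝔪^n lifts to an element of the adjoin algebra divided by y^n
  have key : ∀ (n : ℕ) (m : R), m ∈ 𝔪 ^ n →
      ∃ z ∈ Algebra.adjoin R (mOverY 𝔪 y),
        z * (algebraMap R (FractionRing R) y) ^ n = algebraMap R (FractionRing R) m := by
    intro n
    induction n with
    | zero =>
      intro m _
      exact ⟨algebraMap R _ m, Subalgebra.algebraMap_mem _ m, by simp⟩
    | succ n ih =>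
      intro m hm
      rw [pow_succ] at hm
      refine Submodule.mul_induction_on hm ?_ ?_
      · intro m₁ hm₁ m₂ hm₂
        obtain ⟨z₁, hz₁A, hz₁⟩ := ih m₁ hm₁
        have hz₂eq : (algebraMap R (FractionRing R) m₂ * ↑hYu.unit⁻¹) *
            algebraMap R (FractionRing R) y = algebraMap R (FractionRing R) m₂ := by
          rw [mul_assoc, hYu.val_inv_mul, mul_one]
        have hz₂mem : algebraMap R (FractionRing R) m₂ * ↑hYu.unit⁻¹ ∈ mOverY 𝔪 y :=
          ⟨m₂, hm₂, hz₂eq⟩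
        refine ⟨z₁ * (algebraMap R (FractionRing R) m₂ * ↑hYu.unit⁻¹),
          mul_mem hz₁A (Algebra.subset_adjoin hz₂mem), ?_⟩
        calc z₁ * (algebraMap R (FractionRing R) m₂ * ↑hYu.unit⁻¹) *
              (algebraMap R (FractionRing R) y) ^ (n + 1)
            = (z₁ * (algebraMap R (FractionRing R) y) ^ n) *
              ((algebraMap R (FractionRing R) m₂ * ↑hYu.unit⁻¹) *
                algebraMap R (FractionRing R) y) := by rw [pow_succ]; ring
          _ = algebraMap R (FractionRing R) m₁ * algebraMap R (FractionRing R) m₂ := by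
              rw [hz₁, hz₂eq]
          _ = algebraMap R (FractionRing R) (m₁ * m₂) := (map_mul _ _ _).symm
      · rintro x x' ⟨z₁, hA₁, he₁⟩ ⟨z₂, hA₂, he₂⟩
        exact ⟨z₁ + z₂, add_mem hA₁ hA₂, by rw [add_mul, he₁, he₂, ← map_add]⟩
  -- graded pieces sit in powers of 𝔪
  have hA𝔪 : ∀ d : ℕ, 1 ≤ d → ∀ r ∈ 𝒜 (d : ℤ), r ∈ 𝔪 ^ d := by
    intro d hd
    induction d, hd using Nat.le_induction with
    | base =>
      intro r hr
      rw [pow_one, h𝔪]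
      exact Ideal.subset_span (by simpa using hr)
    | succ n hn ih =>
      intro r hr
      have hr' : r ∈ 𝒜 1 * 𝒜 (n : ℤ) := by
        rw [← hstd (n : ℤ) (by positivity)]
        have hcast : ((n : ℤ) + 1) = ((n + 1 : ℕ) : ℤ) := by push_cast; ring
        rw [hcast]
        exact hr
      refine Submodule.mul_induction_on hr' ?_ ?_
      · intro x hx x' hx'
        have h1 : x' * x ∈ 𝔪 ^ n * 𝔪 :=
          Ideal.mul_mem_mul (ih x' hx') (h𝔪 ▸ Ideal.subset_span (by simpa using hx))
        rw [pow_succ, mul_comm x x']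
        exact h1
      · intro u v hu hv
        exact add_mem hu hv
  -- B is contained in the adjoin algebra
  have hBle : B ≤ Algebra.adjoin R (mOverY 𝔪 y) := by
    intro z hz
    have h := hBnonneg z hz
    have hsub : ∀ z' ∈ (⋃ i : ℤ, ⋃ (_ : 0 ≤ i),
        {z' : FractionRing R | ∃ n : ℕ, ∃ r ∈ 𝒜 (i + n),
          z' * algebraMap R (FractionRing R) (y ^ n) = algebraMap R (FractionRing R) r}),
        z' ∈ Subalgebra.toSubmodule (Algebra.adjoin R (mOverY 𝔪 y)) := by
      rintro z' hz'
      simp only [Set.mem_iUnion, Set.mem_setOf_eq] at hz'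
      obtain ⟨i', hi', n, r, hr, heq⟩ := hz'
      match n with
      | 0 =>
        have : z' = algebraMap R (FractionRing R) r := by simpa using heq
        rw [this]
        exact Subalgebra.algebraMap_mem _ r
      | (n + 1) =>
        set d := (i' + ((n : ℤ) + 1)).toNat with hd
        have hdz : ((d : ℕ) : ℤ) = i' + ((n + 1 : ℕ) : ℤ) := by push_cast; omega
        have hrd : r ∈ 𝒜 ((d : ℕ) : ℤ) := by
          rw [hdz]; exact hr
        have hrm : r ∈ 𝔪 ^ (n + 1) := by
          refine Ideal.pow_le_pow_right (by omega : n + 1 ≤ d) (hA𝔪 d (by omega) r hrd)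
        obtain ⟨w, hwA, hw⟩ := key (n + 1) r hrm
        have : z' = w := by
          apply hKcancel (n + 1)
          rw [hw, ← heq, map_pow]
        rw [this]
        exact hwA
    exact Submodule.span_le.mpr hsub h
  have hBeq : B = Algebra.adjoin R (mOverY 𝔪 y) := le_antisymm hBle hAB
  -- every element of the adjoin algebra is t/y^c with t ∈ 𝔪^c
  have hadj : ∀ z ∈ Algebra.adjoin R (mOverY 𝔪 y),
      ∃ t ∈ 𝔪 ^ c, z * (algebraMap R (FractionRing R) y) ^ c
        = algebraMap R (FractionRing R) t := by
    intro z hzA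
    refine Algebra.adjoin_induction ?_ ?_ ?_ ?_ hzA
    · rintro x ⟨m, hm𝔪, hxy⟩
      rcases Nat.eq_zero_or_pos c with hc0 | hc1
      · -- then 𝔪 = span {y}
        have ha0 : a + 1 = 0 := by omega
        have h := hred 0 (by omega)
        have h1 : ((0 : ℤ) + 1).toNat = 1 := by omega
        have h2 : ((0 : ℤ)).toNat = 0 := by omega
        rw [ipow, ipow, h1, h2, pow_one, pow_zero, mul_one] at h
        have hmy : m ∈ Ideal.span {y} := h ▸ hm𝔪
        obtain ⟨r', hr'⟩ := Ideal.mem_span_singleton'.mp hmy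
        have hx : x = algebraMap R (FractionRing R) r' := by
          apply hKcancel 1
          rw [pow_one, hxy, ← hr', map_mul, mul_comm]
        exact ⟨r', by rw [hc0, pow_zero, Ideal.one_eq_top]; exact Submodule.mem_top,
          by rw [hc0, pow_zero, mul_one, hx]⟩
      · obtain ⟨e, rfl⟩ : ∃ e, c = e + 1 := ⟨c - 1, by omega⟩
        refine ⟨m * y ^ e, ?_, ?_⟩
        · have h1 : m * y ^ e ∈ 𝔪 * 𝔪 ^ e :=
            Ideal.mul_mem_mul hm𝔪 (Ideal.pow_mem_pow hym e)
          rw [pow_succ']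
          exact h1
        · rw [pow_succ', map_mul, map_pow, ← hxy]; ring
    · intro r
      exact ⟨r * y ^ c, Ideal.mul_mem_left _ r (Ideal.pow_mem_pow hym c),
        by rw [map_mul, map_pow]⟩
    · rintro x x' _ _ ⟨t₁, ht₁, he₁⟩ ⟨t₂, ht₂, he₂⟩
      exact ⟨t₁ + t₂, add_mem ht₁ ht₂, by rw [add_mul, he₁, he₂, map_add]⟩
    · rintro x x' _ _ ⟨t₁, ht₁, he₁⟩ ⟨t₂, ht₂, he₂⟩
      have htt : t₁ * t₂ ∈ 𝔪 ^ (c + c) := by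
        rw [pow_add]
        exact Ideal.mul_mem_mul ht₁ ht₂
      rw [hpow c] at htt
      obtain ⟨u, hu, huy⟩ := Ideal.mem_span_singleton_mul.mp htt
      refine ⟨u, hu, hKcancel c _ _ ?_⟩
      calc x * x' * (algebraMap R (FractionRing R) y) ^ c *
            (algebraMap R (FractionRing R) y) ^ c
          = (x * (algebraMap R (FractionRing R) y) ^ c) *
            (x' * (algebraMap R (FractionRing R) y) ^ c) := by ring
        _ = algebraMap R (FractionRing R) (t₁ * t₂) := by rw [he₁, he₂, map_mul]
        _ = algebraMap R (FractionRing R) u * (algebraMap R (FractionRing R) y) ^ c := by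
            rw [← huy, map_mul, map_pow]; ring
  -- the conductor is the image of C
  have hcond : conductorSet ((Algebra.adjoin R (mOverY 𝔪 y) : Subalgebra R (FractionRing R)) :
        Set (FractionRing R))
      = Submodule.map (Algebra.linearMap R (FractionRing R))
          (Submodule.colon (Ideal.span {y ^ c}) (𝔪 ^ c : Ideal R)) := by
    apply le_antisymm
    · intro z hz
      obtain ⟨r, hr1⟩ := hz 1 (Subalgebra.one_mem _)
      rw [mul_one] at hr1
      refine Submodule.mem_map.mpr ⟨r, ?_, hr1.symm⟩
      rw [Submodule.mem_colon]
      intro m hm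
      obtain ⟨w, hwA, hw⟩ := key c m hm
      obtain ⟨s, hs⟩ := hz w hwA
      have heq : algebraMap R (FractionRing R) (r * m)
          = algebraMap R (FractionRing R) (s * y ^ c) := by
        rw [map_mul, map_mul, map_pow, ← hr1, ← hw, ← hs]; ring
      have hrm : r * m = s * y ^ c := hinj heq
      simpa [smul_eq_mul] using Ideal.mem_span_singleton'.mpr ⟨s, hrm.symm⟩
    · rintro z hzm
      obtain ⟨r, hrC, rfl⟩ := Submodule.mem_map.mp hzm
      intro b hb
      obtain ⟨t, ht, hbt⟩ := hadj b hb
      have hrt := Submodule.mem_colon.mp hrC t ht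
      rw [smul_eq_mul] at hrt
      obtain ⟨s, hs⟩ := Ideal.mem_span_singleton'.mp hrt
      refine ⟨s, hKcancel c _ _ ?_⟩
      calc (Algebra.linearMap R (FractionRing R)) r * b *
            (algebraMap R (FractionRing R) y) ^ c
          = algebraMap R (FractionRing R) r * (b * (algebraMap R (FractionRing R) y) ^ c) := by
            rw [Algebra.linearMap_apply]; ring
        _ = algebraMap R (FractionRing R) (r * t) := by rw [hbt, map_mul]
        _ = algebraMap R (FractionRing R) s * (algebraMap R (FractionRing R) y) ^ c := by
            rw [← hs, map_mul, map_pow]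
  -- the colon ideal computation
  set d := (i - j).toNat with hdd
  obtain ⟨e, he⟩ : ∃ e : ℕ, j.toNat = c + e := ⟨j.toNat - c, by omega⟩
  have hIJ : i.toNat = (c + e) + d := by omega
  have hcolon : Submodule.colon (ipow (Ideal.span {y}) i) (ipow 𝔪 j)
      = Ideal.span {y ^ d} * Submodule.colon (Ideal.span {y ^ c}) (𝔪 ^ c : Ideal R) := by
    show Submodule.colon (Ideal.span {y} ^ i.toNat) (𝔪 ^ j.toNat : Ideal R) = _
    rw [hIJ, he, Ideal.span_singleton_pow, aux_colon_step hynzd 𝔪 hym (c + e) d,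
      aux_colon_eq hynzd 𝔪 c hpow e]
  have hcolon' : Submodule.colon (ipow (Ideal.span {y}) i) (ipow 𝔪 j)
      = 𝔪 ^ d * Submodule.colon (Ideal.span {y ^ c}) (𝔪 ^ c : Ideal R) := by
    rw [hcolon, ← aux_powC hynzd 𝔪 hym c hpow d]
  have hlin : (Algebra.ofId R (FractionRing R)).toLinearMap
      = Algebra.linearMap R (FractionRing R) := rfl
  have hms : Submodule.map (Algebra.linearMap R (FractionRing R)) (Ideal.span {y ^ d})
      = Submodule.span R {(algebraMap R (FractionRing R) y) ^ d} := by
    rw [Ideal.span, Submodule.map_span, Set.image_singleton, Algebra.linearMap_apply, map_pow]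
  refine ⟨hBeq, ?_, ?_⟩
  · rw [hBeq, hcond, hcolon, ← hlin, Submodule.map_mul, hlin, hms]
  · rw [hBeq, hcond, hcolon']
    show _ = 𝔪 ^ d • _
    rw [← Ideal.smul_eq_mul, Submodule.map_smul'']
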